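/- Let F : (0, ∞) → (0, ∞) be continuous and integrable on (0, 1), and set A(t) := ∫₀ᵗ F(s) ds for t > 0. Assume the parabolicity condition ∫₁^∞ t / A(t) dt = +∞. Let φ : (0, ∞) → (0, ∞) be locally Lipschitz, and assume that for every δ > 0 and every nonnegative Lipschitz function ψ : [δ, ∞) → ℝ vanishing outside some bounded set, one has ∫_δ^∞ φ′(t) ψ′(t) F(t) dt ≥ 0 (the derivatives φ′ and ψ′ exist almost everywhere since the functions are locally Lipschitz). Then φ is constant on (0, ∞). -/

import Mathlib

open MeasureTheory Set


/-- FTC for globally Lipschitz real functions. -/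
theorem lipschitz_ftc {f : ℝ → ℝ} {K : NNReal} (hf : LipschitzWith K f) {a b : ℝ}
    (hab : a ≤ b) :
    IntegrableOn (deriv f) (Ioc a b) ∧ ∫ t in Ioc a b, deriv f t = f b - f a := by
  have hK : ∀ s t : ℝ, s ≤ t → |f t - f s| ≤ K * (t - s) := by
    intro s t hst
    have := hf.dist_le_mul t s
    rw [Real.dist_eq, Real.dist_eq, abs_of_nonneg (sub_nonneg.2 hst)] at this
    exact this
  set g : ℝ → ℝ := fun t => f t + K * t with hg_def
  set h : ℝ → ℝ := fun t => K * t - f t with hh_def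
  have hgmono : Monotone g := by
    intro s t hst
    have := (abs_le.1 (hK s t hst)).1
    simp only [hg_def]; nlinarith
  have hhmono : Monotone h := by
    intro s t hst
    have := (abs_le.1 (hK s t hst)).2
    simp only [hh_def]; nlinarith
  set μg := hgmono.stieltjesFunction.measure with hμg
  set μh := hhmono.stieltjesFunction.measure with hμh
  set Dg : ℝ → ℝ := fun x => (μg.rnDeriv volume x).toReal with hDg
  set Dh : ℝ → ℝ := fun x => (μh.rnDeriv volume x).toReal with hDh
  -- Stieltjes function equals g (continuity)
  have hgc : Continuous g := by
    have : Continuous f := hf.continuous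
    continuity
  have hhc : Continuous h := by
    have : Continuous f := hf.continuous
    continuity
  have hsg : ∀ x, hgmono.stieltjesFunction x = g x := by
    intro x
    rw [Monotone.stieltjesFunction_eq]
    exact hgmono.continuousWithinAt_Ioi_iff_rightLim_eq.1 (hgc.continuousAt).continuousWithinAt
  have hsh : ∀ x, hhmono.stieltjesFunction x = h x := by
    intro x
    rw [Monotone.stieltjesFunction_eq]
    exact hhmono.continuousWithinAt_Ioi_iff_rightLim_eq.1 (hhc.continuousAt).continuousWithinAt
  have hμgIoc : μg (Ioc a b) = ENNReal.ofReal (g b - g a) := by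
    rw [hμg, StieltjesFunction.measure_Ioc, hsg, hsg]
  have hμhIoc : μh (Ioc a b) = ENNReal.ofReal (h b - h a) := by
    rw [hμh, StieltjesFunction.measure_Ioc, hsh, hsh]
  -- integrability of Dg, Dh on Ioc a b
  have hlg : ∫⁻ x in Ioc a b, μg.rnDeriv volume x ≤ μg (Ioc a b) :=
    Measure.setLIntegral_rnDeriv_le _
  have hlh : ∫⁻ x in Ioc a b, μh.rnDeriv volume x ≤ μh (Ioc a b) :=
    Measure.setLIntegral_rnDeriv_le _
  have hgne : ∫⁻ x in Ioc a b, μg.rnDeriv volume x ≠ ⊤ :=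
    (hlg.trans_lt (by rw [hμgIoc]; exact ENNReal.ofReal_lt_top)).ne
  have hhne : ∫⁻ x in Ioc a b, μh.rnDeriv volume x ≠ ⊤ :=
    (hlh.trans_lt (by rw [hμhIoc]; exact ENNReal.ofReal_lt_top)).ne
  have hDgint : IntegrableOn Dg (Ioc a b) :=
    integrable_toReal_of_lintegral_ne_top (Measure.measurable_rnDeriv _ _).aemeasurable hgne
  have hDhint : IntegrableOn Dh (Ioc a b) :=
    integrable_toReal_of_lintegral_ne_top (Measure.measurable_rnDeriv _ _).aemeasurable hhne
  -- ∫ Dg ≤ g b - g a, ∫ Dh ≤ h b - h a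
  have hIg : ∫ x in Ioc a b, Dg x ≤ g b - g a := by
    rw [hDg]
    rw [integral_toReal (Measure.measurable_rnDeriv _ _).aemeasurable
      (ae_restrict_of_ae (Measure.rnDeriv_lt_top _ _))]
    have h1 : (∫⁻ x in Ioc a b, μg.rnDeriv volume x).toReal ≤ (μg (Ioc a b)).toReal :=
      ENNReal.toReal_mono (by rw [hμgIoc]; exact ENNReal.ofReal_ne_top) hlg
    refine h1.trans ?_
    rw [hμgIoc, ENNReal.toReal_ofReal (sub_nonneg.2 (hgmono hab))]
  have hIh : ∫ x in Ioc a b, Dh x ≤ h b - h a := by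
    rw [hDh]
    rw [integral_toReal (Measure.measurable_rnDeriv _ _).aemeasurable
      (ae_restrict_of_ae (Measure.rnDeriv_lt_top _ _))]
    have h1 : (∫⁻ x in Ioc a b, μh.rnDeriv volume x).toReal ≤ (μh (Ioc a b)).toReal :=
      ENNReal.toReal_mono (by rw [hμhIoc]; exact ENNReal.ofReal_ne_top) hlh
    refine h1.trans ?_
    rw [hμhIoc, ENNReal.toReal_ofReal (sub_nonneg.2 (hhmono hab))]
  -- a.e. derivative facts
  have hDgae : ∀ᵐ x, HasDerivAt g (Dg x) x := hgmono.ae_hasDerivAt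
  have hDhae : ∀ᵐ x, HasDerivAt h (Dh x) x := hhmono.ae_hasDerivAt
  have hfae : ∀ᵐ x, deriv f x = Dg x - K ∧ Dg x + Dh x = 2 * K := by
    filter_upwards [hDgae, hDhae] with x hgx hhx
    have hfx : HasDerivAt f (Dg x - K) x := by
      have : HasDerivAt (fun t : ℝ => g t - K * t) (Dg x - K) x := by
        have h' := hgx.sub ((hasDerivAt_id x).const_mul (K : ℝ))
        simp only [mul_one] at h'
        exact h'
      simpa [hg_def] using this
    have hfx' : HasDerivAt f ((K : ℝ) - Dh x) x := by
      have : HasDerivAt (fun t : ℝ => K * t - h t) ((K : ℝ) - Dh x) x := by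
        have h' := ((hasDerivAt_id x).const_mul (K : ℝ)).sub hhx
        simp only [mul_one] at h'
        exact h'
      simpa [hh_def] using this
    have heq : Dg x - K = (K : ℝ) - Dh x := hfx.unique hfx'
    exact ⟨hfx.deriv, by linarith⟩
  -- conclude
  have hsum : (∫ x in Ioc a b, Dg x) + ∫ x in Ioc a b, Dh x = 2 * K * (b - a) := by
    rw [← integral_add hDgint hDhint]
    have : ∀ᵐ x ∂(volume.restrict (Ioc a b)), Dg x + Dh x = 2 * K :=
      ae_restrict_of_ae (hfae.mono fun x hx => hx.2)
    rw [integral_congr_ae this]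
    simp [Real.volume_Ioc, ENNReal.toReal_ofReal (by linarith : (0:ℝ) ≤ b - a), mul_comm, hab]
  have hgba : g b - g a + (h b - h a) = 2 * K * (b - a) := by
    simp only [hg_def, hh_def]; ring
  have hIgeq : ∫ x in Ioc a b, Dg x = g b - g a := by linarith
  have hderiv_ae : ∀ᵐ x ∂(volume.restrict (Ioc a b)), deriv f x = Dg x - K :=
    ae_restrict_of_ae (hfae.mono fun x hx => hx.1)
  constructor
  · exact (hDgint.sub (integrableOn_const (by simp [Real.volume_Ioc]))).congr
      (hderiv_ae.mono fun x hx => hx.symm)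
  · rw [integral_congr_ae hderiv_ae, integral_sub hDgint
      (integrableOn_const (by simp [Real.volume_Ioc]))]
    rw [hIgeq]
    simp only [hg_def]
    rw [integral_const]
    simp [Real.volume_Ioc, ENNReal.toReal_ofReal (by linarith : (0:ℝ) ≤ b - a), max_eq_left (sub_nonneg.2 hab)]
    ring




theorem phi_ftc (φ : ℝ → ℝ)
    (hφlip : ∀ a b : ℝ, 0 < a → ∃ K, LipschitzOnWith K φ (Icc a b))
    {a b : ℝ} (ha : 0 < a) (hab : a ≤ b) :
    IntegrableOn (deriv φ) (Ioc a b) ∧ ∫ t in Ioc a b, deriv φ t = φ b - φ a := by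
  obtain ⟨K, hK⟩ := hφlip a b ha
  obtain ⟨g, hgL, hEq⟩ := hK.extend_real
  have hgb : g b = φ b := (hEq (right_mem_Icc.2 hab)).symm
  have hga : g a = φ a := (hEq (left_mem_Icc.2 hab)).symm
  have hder : ∀ x ∈ Ioo a b, deriv φ x = deriv g x := by
    intro x hx
    have hev : φ =ᶠ[nhds x] g := by
      filter_upwards [isOpen_Ioo.mem_nhds hx] with u hu
      exact hEq (Ioo_subset_Icc_self hu)
    exact Filter.EventuallyEq.deriv_eq hev
  have hae : deriv φ =ᶠ[ae (volume.restrict (Ioc a b))] deriv g := by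
    have hb : ∀ᵐ x : ℝ, x ≠ b := by
      have : (volume : Measure ℝ) {b} = 0 := Real.volume_singleton
      rw [ae_iff]
      simpa [Classical.not_not] using this
    filter_upwards [ae_restrict_mem measurableSet_Ioc, ae_restrict_of_ae hb] with x hx hxb
    exact hder x ⟨hx.1, lt_of_le_of_ne hx.2 hxb⟩
  obtain ⟨hint, heq⟩ := lipschitz_ftc hgL hab
  constructor
  · exact hint.congr hae.symm
  · rw [integral_congr_ae hae, heq, hgb, hga]

theorem Finv_contOn {F : ℝ → ℝ} (hFcont : ContinuousOn F (Ioi 0))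
    (hFpos : ∀ t : ℝ, 0 < t → 0 < F t) : ContinuousOn (fun s => (F s)⁻¹) (Ioi 0) :=
  hFcont.inv₀ fun t ht => (hFpos t ht).ne'

theorem Finv_intOn {F : ℝ → ℝ} (hFcont : ContinuousOn F (Ioi 0))
    (hFpos : ∀ t : ℝ, 0 < t → 0 < F t) {u v : ℝ} (hu : 0 < u) :
    IntegrableOn (fun s => (F s)⁻¹) (Ioc u v) := by
  rcases le_total v u with hvu | huv
  · rw [Ioc_eq_empty (fun h => absurd hvu (not_le.2 h))]
    exact integrableOn_empty
  · exact (((Finv_contOn hFcont hFpos).mono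
      (fun s hs => lt_of_lt_of_le hu hs.1)).integrableOn_Icc).mono_set Ioc_subset_Icc_self

theorem Finv_int_pos {F : ℝ → ℝ} (hFcont : ContinuousOn F (Ioi 0))
    (hFpos : ∀ t : ℝ, 0 < t → 0 < F t) {u v : ℝ} (hu : 0 < u) (huv : u < v) :
    0 < ∫ s in Ioc u v, (F s)⁻¹ := by
  rw [setIntegral_pos_iff_support_of_nonneg_ae]
  · have : Function.support (fun s => (F s)⁻¹) ∩ Ioc u v = Ioc u v := by
      refine inter_eq_right.2 fun s hs => ?_
      exact inv_ne_zero (hFpos s (hu.trans hs.1)).ne'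
    rw [this, Real.volume_Ioc]
    simpa using huv
  · filter_upwards [ae_restrict_mem measurableSet_Ioc] with s hs
    exact (inv_pos.2 (hFpos s (hu.trans hs.1))).le
  · exact Finv_intOn hFcont hFpos hu

theorem Finv_bound {F : ℝ → ℝ} (hFcont : ContinuousOn F (Ioi 0))
    (hFpos : ∀ t : ℝ, 0 < t → 0 < F t) {u v : ℝ} (hu : 0 < u) :
    ∃ M : ℝ, 0 ≤ M ∧ ∀ s ∈ Icc u v, (F s)⁻¹ ≤ M := by
  obtain ⟨C, hC⟩ := (isCompact_Icc (a := u) (b := v)).exists_bound_of_continuousOn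
    ((Finv_contOn hFcont hFpos).mono (fun s hs => lt_of_lt_of_le hu hs.1))
  refine ⟨max C 0, le_max_right _ _, fun s hs => ?_⟩
  have := hC s hs
  rw [Real.norm_eq_abs] at this
  exact ((le_abs_self _).trans this).trans (le_max_left _ _)

theorem clamp_mem {c d : ℝ} (hcd : c ≤ d) (t : ℝ) : max c (min t d) ∈ Icc c d :=
  ⟨le_max_left _ _, max_le hcd (min_le_right _ _)⟩

theorem clamp_mono {c d : ℝ} : Monotone (fun t => max c (min t d)) :=
  fun _ _ hst => max_le_max le_rfl (min_le_min hst le_rfl)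

theorem clamp_sub_le {c d s t : ℝ} (hst : s ≤ t) :
    max c (min t d) - max c (min s d) ≤ t - s := by
  have h1 : min t d ≤ min s d + (t - s) := by
    rcases le_total s d with h | h
    · simp only [min_eq_left h]; rcases le_total t d with h' | h'
      · simp [min_eq_left h']
      · simp only [min_eq_right h']; linarith
    · simp only [min_eq_right h]
      have : min t d ≤ d := min_le_right _ _
      linarith
  rw [sub_le_iff_le_add]
  refine max_le ?_ ?_
  · have : c ≤ max c (min s d) := le_max_left _ _; linarith
  · have : min s d ≤ max c (min s d) := le_max_right _ _; linarith

/-- The ramp primitive `H t = ∫_{c}^{clamp t} F⁻¹`. -/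
noncomputable def rampI (F : ℝ → ℝ) (c d t : ℝ) : ℝ :=
  ∫ s in Ioc c (max c (min t d)), (F s)⁻¹

theorem rampI_left {F : ℝ → ℝ} {c d t : ℝ} (hcd : c ≤ d) (ht : t ≤ c) :
    rampI F c d t = 0 := by
  have : max c (min t d) = c := by
    rcases le_total t d with h | h
    · simp [min_eq_left h, max_eq_left ht]
    · rw [min_eq_right h, max_eq_left (h.trans ht)]
  simp [rampI, this]

theorem rampI_right {F : ℝ → ℝ} {c d t : ℝ} (hcd : c ≤ d) (ht : d ≤ t) :
    rampI F c d t = ∫ s in Ioc c d, (F s)⁻¹ := by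
  have : max c (min t d) = d := by simp [min_eq_right ht, max_eq_right hcd]
  simp [rampI, this]

theorem rampI_sub {F : ℝ → ℝ} (hFcont : ContinuousOn F (Ioi 0))
    (hFpos : ∀ t : ℝ, 0 < t → 0 < F t) {c d s t : ℝ} (hc : 0 < c) (hcd : c ≤ d) (hst : s ≤ t) :
    rampI F c d t - rampI F c d s
      = ∫ x in Ioc (max c (min s d)) (max c (min t d)), (F x)⁻¹ := by
  have h1 : c ≤ max c (min s d) := le_max_left _ _
  have h2 : max c (min s d) ≤ max c (min t d) := clamp_mono hst
  have hsplit : Ioc c (max c (min s d)) ∪ Ioc (max c (min s d)) (max c (min t d))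
      = Ioc c (max c (min t d)) := Ioc_union_Ioc_eq_Ioc h1 h2
  have := setIntegral_union (f := fun x => (F x)⁻¹) (μ := volume)
    (s := Ioc c (max c (min s d))) (t := Ioc (max c (min s d)) (max c (min t d)))
    (Set.Ioc_disjoint_Ioc_of_le le_rfl) measurableSet_Ioc
    (Finv_intOn hFcont hFpos hc)
    (Finv_intOn hFcont hFpos (hc.trans_le h1))
  rw [hsplit] at this
  rw [rampI, rampI, this]; ring

theorem rampI_mono {F : ℝ → ℝ} (hFcont : ContinuousOn F (Ioi 0))
    (hFpos : ∀ t : ℝ, 0 < t → 0 < F t) {c d : ℝ} (hc : 0 < c) (hcd : c ≤ d) :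
    Monotone (rampI F c d) := by
  intro s t hst
  have h := rampI_sub hFcont hFpos hc hcd hst (s := s) (t := t)
  have hnn : 0 ≤ ∫ x in Ioc (max c (min s d)) (max c (min t d)), (F x)⁻¹ := by
    refine setIntegral_nonneg measurableSet_Ioc fun x hx => ?_
    have : 0 < x := lt_of_lt_of_le hc ((le_max_left _ _).trans hx.1.le)
    exact (inv_pos.2 (hFpos x this)).le
  linarith

theorem rampI_nonneg {F : ℝ → ℝ} (hFcont : ContinuousOn F (Ioi 0))
    (hFpos : ∀ t : ℝ, 0 < t → 0 < F t) {c d t : ℝ} (hc : 0 < c) (hcd : c ≤ d) :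
    0 ≤ rampI F c d t := by
  rcases le_total t c with h | h
  · rw [rampI_left hcd h]
  · rw [← rampI_left (F := F) hcd (le_refl c)]
    exact rampI_mono hFcont hFpos hc hcd h

theorem rampI_le {F : ℝ → ℝ} (hFcont : ContinuousOn F (Ioi 0))
    (hFpos : ∀ t : ℝ, 0 < t → 0 < F t) {c d t : ℝ} (hc : 0 < c) (hcd : c ≤ d) :
    rampI F c d t ≤ ∫ s in Ioc c d, (F s)⁻¹ := by
  rcases le_total t d with h | h
  · rw [← rampI_right (F := F) hcd (le_refl d)]
    exact rampI_mono hFcont hFpos hc hcd h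
  · rw [rampI_right hcd h]

theorem rampI_lipschitz {F : ℝ → ℝ} (hFcont : ContinuousOn F (Ioi 0))
    (hFpos : ∀ t : ℝ, 0 < t → 0 < F t) {c d : ℝ} (hc : 0 < c) (hcd : c ≤ d) :
    ∃ M : NNReal, LipschitzWith M (rampI F c d) := by
  obtain ⟨M, hM0, hM⟩ := Finv_bound hFcont hFpos (u := c) (v := d) hc
  refine ⟨⟨M, hM0⟩, LipschitzWith.of_dist_le_mul fun s t => ?_⟩
  wlog hst : t ≤ s generalizing s t
  · rw [dist_comm, dist_comm s t]; exact this _ _ (le_of_not_ge hst)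
  rw [Real.dist_eq, Real.dist_eq,
    abs_of_nonneg (sub_nonneg.2 (rampI_mono hFcont hFpos hc hcd hst)),
    abs_of_nonneg (sub_nonneg.2 hst)]
  rw [rampI_sub hFcont hFpos hc hcd hst]
  have hsub : Ioc (max c (min t d)) (max c (min s d)) ⊆ Icc c d := fun x hx =>
    ⟨(le_max_left _ _).trans hx.1.le, hx.2.trans (clamp_mem hcd s).2⟩
  calc ∫ x in Ioc (max c (min t d)) (max c (min s d)), (F x)⁻¹
      ≤ ∫ _x in Ioc (max c (min t d)) (max c (min s d)), M := by
        refine setIntegral_mono_on ?_ (by simp) measurableSet_Ioc fun x hx => hM x (hsub hx)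
        exact Finv_intOn hFcont hFpos (hc.trans_le (le_max_left _ _))
    _ ≤ (s - t) * M := by
        rw [setIntegral_const, smul_eq_mul, measureReal_def, Real.volume_Ioc]
        rcases le_or_gt (max c (min t d)) (max c (min s d)) with h | h
        · rw [ENNReal.toReal_ofReal (sub_nonneg.2 h)]
          exact mul_le_mul_of_nonneg_right (clamp_sub_le hst) hM0
        · rw [ENNReal.ofReal_eq_zero.2 (by linarith), ENNReal.toReal_zero, zero_mul]
          exact mul_nonneg (by linarith) hM0
    _ = (⟨M, hM0⟩ : NNReal) * (s - t) := by
        simp; ring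

theorem rampI_hasDerivAt {F : ℝ → ℝ} (hFcont : ContinuousOn F (Ioi 0))
    (hFpos : ∀ t : ℝ, 0 < t → 0 < F t) {c d t : ℝ} (hc : 0 < c) (ht : t ∈ Ioo c d) :
    HasDerivAt (rampI F c d) ((F t)⁻¹) t := by
  have ht0 : (0:ℝ) < t := hc.trans ht.1
  have hloc : rampI F c d =ᶠ[nhds t] fun u => ∫ s in c..u, (F s)⁻¹ := by
    filter_upwards [isOpen_Ioo.mem_nhds ht] with u hu
    have : max c (min u d) = u := by
      rw [min_eq_left hu.2.le, max_eq_right hu.1.le]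
    rw [rampI, this, intervalIntegral.integral_of_le hu.1.le]
  have hD : HasDerivAt (fun u => ∫ s in c..u, (F s)⁻¹) ((F t)⁻¹) t := by
    refine intervalIntegral.integral_hasDerivAt_right ?_ ?_ ?_
    · rw [intervalIntegrable_iff_integrableOn_Ioc_of_le ht.1.le]
      exact Finv_intOn hFcont hFpos hc
    · exact (Finv_contOn hFcont hFpos).stronglyMeasurableAtFilter isOpen_Ioi t ht0
    · exact ((Finv_contOn hFcont hFpos).continuousAt (Ioi_mem_nhds ht0))
  exact hD.congr_of_eventuallyEq hloc

theorem rampI_lt {F : ℝ → ℝ} (hFcont : ContinuousOn F (Ioi 0))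
    (hFpos : ∀ t : ℝ, 0 < t → 0 < F t) {c d t : ℝ} (hc : 0 < c) (hcd : c < d) (ht : t < d) :
    rampI F c d t < ∫ s in Ioc c d, (F s)⁻¹ := by
  have h1 : rampI F c d d - rampI F c d t
      = ∫ x in Ioc (max c (min t d)) d, (F x)⁻¹ := by
    rw [rampI_sub hFcont hFpos hc hcd.le ht.le]
    congr 2
    rw [min_eq_left (le_refl d), max_eq_right hcd.le]
  have hcl : max c (min t d) < d := by
    rcases le_total t c with h | h
    · rw [min_eq_left (h.trans hcd.le), max_eq_left h]; exact hcd
    · rw [min_eq_left ht.le, max_eq_right h]; exact ht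
  have h2 : 0 < ∫ x in Ioc (max c (min t d)) d, (F x)⁻¹ :=
    Finv_int_pos hFcont hFpos (hc.trans_le (le_max_left _ _)) hcl
  have h3 := rampI_right (F := F) hcd.le (le_refl d)
  linarith

theorem rampI_pos {F : ℝ → ℝ} (hFcont : ContinuousOn F (Ioi 0))
    (hFpos : ∀ t : ℝ, 0 < t → 0 < F t) {c d t : ℝ} (hc : 0 < c) (hct : c < t) (htd : t ≤ d) :
    0 < rampI F c d t := by
  have h := rampI_sub hFcont hFpos hc (hct.le.trans htd) (le_of_lt hct) (s := c) (t := t)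
  rw [rampI_left (F := F) (hct.le.trans htd) (le_refl c)] at h
  have hclc : max c (min c d) = c := by rw [min_eq_left (hct.le.trans htd), max_self]
  have hclt : max c (min t d) = t := by rw [min_eq_left htd, max_eq_right hct.le]
  rw [hclc, hclt] at h
  have := Finv_int_pos hFcont hFpos hc hct
  linarith


theorem A_int {F : ℝ → ℝ} (hFcont : ContinuousOn F (Ioi 0))
    (hFint : IntegrableOn F (Ioo 0 1)) {t : ℝ} (_ht : 0 < t) :
    IntegrableOn F (Ioo 0 t) := by
  rcases le_total t 1 with h | h
  · exact hFint.mono_set (Ioo_subset_Ioo_right h)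
  · have hsub : Ioo 0 t ⊆ Ioo 0 1 ∪ Icc 1 t := by
      intro x hx
      rcases lt_or_ge x 1 with h' | h'
      · exact Or.inl ⟨hx.1, h'⟩
      · exact Or.inr ⟨h', hx.2.le⟩
    refine (IntegrableOn.union hFint ?_).mono_set hsub
    exact (hFcont.mono fun s hs => lt_of_lt_of_le one_pos hs.1).integrableOn_Icc

theorem A_pos {F : ℝ → ℝ} (hFcont : ContinuousOn F (Ioi 0))
    (hFpos : ∀ t : ℝ, 0 < t → 0 < F t) (hFint : IntegrableOn F (Ioo 0 1))
    {t : ℝ} (ht : 0 < t) : 0 < ∫ s in Ioo (0:ℝ) t, F s := by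
  rw [setIntegral_pos_iff_support_of_nonneg_ae]
  · have : Function.support F ∩ Ioo 0 t = Ioo 0 t :=
      inter_eq_right.2 fun s hs => (hFpos s hs.1).ne'
    rw [this, Real.volume_Ioo]
    simpa using ht
  · filter_upwards [ae_restrict_mem measurableSet_Ioo] with s hs
    exact (hFpos s hs.1).le
  · exact A_int hFcont hFint ht

theorem A_mono {F : ℝ → ℝ} (hFcont : ContinuousOn F (Ioi 0))
    (hFpos : ∀ t : ℝ, 0 < t → 0 < F t) (hFint : IntegrableOn F (Ioo 0 1))
    {u v : ℝ} (hu : 0 < u) (huv : u ≤ v) :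
    (∫ s in Ioo (0:ℝ) u, F s) ≤ ∫ s in Ioo (0:ℝ) v, F s := by
  refine setIntegral_mono_set (A_int hFcont hFint (hu.trans_le huv)) ?_ ?_
  · filter_upwards [ae_restrict_mem measurableSet_Ioo] with s hs
    exact (hFpos s hs.1).le
  · exact HasSubset.Subset.eventuallyLE (Ioo_subset_Ioo_right huv)

/-- AM-GM / Cauchy-Schwarz step:  `t²/A(2t) ≤ ∫_{(t,2t)} F⁻¹`. -/
theorem cs_step {F : ℝ → ℝ} (hFcont : ContinuousOn F (Ioi 0))
    (hFpos : ∀ t : ℝ, 0 < t → 0 < F t) (hFint : IntegrableOn F (Ioo 0 1))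
    {t : ℝ} (ht : 0 < t) :
    ENNReal.ofReal (t * t / ∫ s in Ioo (0:ℝ) (2*t), F s)
      ≤ ∫⁻ s in Ioo t (2*t), ENNReal.ofReal (F s)⁻¹ := by
  set A2 : ℝ := ∫ s in Ioo (0:ℝ) (2*t), F s with hA2
  have hA2pos : 0 < A2 := A_pos hFcont hFpos hFint (by linarith)
  set ε : ℝ := t / A2 with hε
  have hεpos : 0 < ε := div_pos ht hA2pos
  have hFmeas : AEMeasurable F (volume.restrict (Ioo t (2*t))) :=
    (hFcont.mono fun s hs => ht.trans hs.1).aemeasurable measurableSet_Ioo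
  -- pointwise AM-GM
  have hpt : ∀ᵐ s ∂(volume.restrict (Ioo t (2*t))),
      ENNReal.ofReal (2:ℝ) ≤ ENNReal.ofReal (ε * F s) + ENNReal.ofReal (ε⁻¹ * (F s)⁻¹) := by
    filter_upwards [ae_restrict_mem measurableSet_Ioo] with s hs
    have hFs : 0 < F s := hFpos s (ht.trans hs.1)
    have hx : 0 < ε * F s := mul_pos hεpos hFs
    have hinv : ε⁻¹ * (F s)⁻¹ = (ε * F s)⁻¹ := by rw [mul_inv]
    rw [← ENNReal.ofReal_add (by positivity) (by positivity), hinv]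
    refine ENNReal.ofReal_le_ofReal ?_
    have hxx : ε * F s * (ε * F s)⁻¹ = 1 := mul_inv_cancel₀ hx.ne'
    nlinarith [sq_nonneg (ε * F s - 1)]
  -- integrate
  have hvol : volume (Ioo t (2*t)) = ENNReal.ofReal t := by
    rw [Real.volume_Ioo]; congr 1; ring
  have h1 : ENNReal.ofReal 2 * ENNReal.ofReal t
      ≤ ∫⁻ s in Ioo t (2*t), (ENNReal.ofReal (ε * F s) + ENNReal.ofReal (ε⁻¹ * (F s)⁻¹)) := by
    calc ENNReal.ofReal 2 * ENNReal.ofReal t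
        = ∫⁻ _s in Ioo t (2*t), ENNReal.ofReal (2:ℝ) := by rw [setLIntegral_const, hvol]
      _ ≤ _ := lintegral_mono_ae hpt
  have hsplit : ∫⁻ s in Ioo t (2*t), (ENNReal.ofReal (ε * F s) + ENNReal.ofReal (ε⁻¹ * (F s)⁻¹))
      = (∫⁻ s in Ioo t (2*t), ENNReal.ofReal (ε * F s))
        + ∫⁻ s in Ioo t (2*t), ENNReal.ofReal (ε⁻¹ * (F s)⁻¹) :=
    lintegral_add_left' (hFmeas.const_mul ε).ennreal_ofReal _
  have hmul1 : (∫⁻ s in Ioo t (2*t), ENNReal.ofReal (ε * F s))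
      = ENNReal.ofReal ε * ∫⁻ s in Ioo t (2*t), ENNReal.ofReal (F s) := by
    rw [← lintegral_const_mul' _ _ ENNReal.ofReal_ne_top]
    refine lintegral_congr fun s => ?_
    rw [ENNReal.ofReal_mul hεpos.le]
  have hmul2 : (∫⁻ s in Ioo t (2*t), ENNReal.ofReal (ε⁻¹ * (F s)⁻¹))
      = ENNReal.ofReal ε⁻¹ * ∫⁻ s in Ioo t (2*t), ENNReal.ofReal (F s)⁻¹ := by
    rw [← lintegral_const_mul' _ _ ENNReal.ofReal_ne_top]
    refine lintegral_congr fun s => ?_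
    rw [ENNReal.ofReal_mul (inv_pos.2 hεpos).le]
  have hFbound : (∫⁻ s in Ioo t (2*t), ENNReal.ofReal (F s)) ≤ ENNReal.ofReal A2 := by
    refine le_trans (lintegral_mono_set (Ioo_subset_Ioo_left ht.le)) ?_
    rw [hA2, ofReal_integral_eq_lintegral_ofReal (A_int hFcont hFint (by linarith))
      (by filter_upwards [ae_restrict_mem measurableSet_Ioo] with s hs
          exact (hFpos s hs.1).le)]
  set JJ : ENNReal := ∫⁻ s in Ioo t (2*t), ENNReal.ofReal (F s)⁻¹ with hJJ
  have h2 : ENNReal.ofReal t + ENNReal.ofReal t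
      ≤ ENNReal.ofReal t + ENNReal.ofReal ε⁻¹ * JJ := by
    have hεA : ENNReal.ofReal ε * ENNReal.ofReal A2 = ENNReal.ofReal t := by
      rw [← ENNReal.ofReal_mul hεpos.le, hε, div_mul_cancel₀ _ hA2pos.ne']
    calc ENNReal.ofReal t + ENNReal.ofReal t
        = ENNReal.ofReal 2 * ENNReal.ofReal t := by
          rw [← ENNReal.ofReal_add ht.le ht.le,
            ← ENNReal.ofReal_mul (by norm_num : (0:ℝ) ≤ 2)]
          congr 1; ring
      _ ≤ _ := by
          refine (h1.trans_eq hsplit).trans ?_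
          rw [hmul1, hmul2]
          refine add_le_add ?_ le_rfl
          calc ENNReal.ofReal ε * ∫⁻ s in Ioo t (2*t), ENNReal.ofReal (F s)
              ≤ ENNReal.ofReal ε * ENNReal.ofReal A2 := mul_le_mul_right hFbound _
            _ = ENNReal.ofReal t := hεA
  have h3 : ENNReal.ofReal t ≤ ENNReal.ofReal ε⁻¹ * JJ :=
    (ENNReal.add_le_add_iff_left ENNReal.ofReal_ne_top).1 h2
  calc ENNReal.ofReal (t * t / A2)
      = ENNReal.ofReal ε * ENNReal.ofReal t := by
        rw [← ENNReal.ofReal_mul hεpos.le]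
        congr 1
        rw [hε]; ring
    _ ≤ ENNReal.ofReal ε * (ENNReal.ofReal ε⁻¹ * JJ) := mul_le_mul_right h3 _
    _ = JJ := by
        rw [← mul_assoc, ← ENNReal.ofReal_mul hεpos.le, mul_inv_cancel₀ hεpos.ne']
        simp


theorem lipschitz_affine {f g : ℝ → ℝ} {K : NNReal} (hf : LipschitzWith K f) (c d : ℝ)
    (hg : ∀ u, g u = c + d * f u) : ∃ K' : NNReal, LipschitzWith K' g := by
  refine ⟨⟨|d|, abs_nonneg d⟩ * K, LipschitzWith.of_dist_le_mul fun u v => ?_⟩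
  have h := hf.dist_le_mul u v
  rw [Real.dist_eq] at h
  rw [Real.dist_eq, hg u, hg v]
  calc |c + d * f u - (c + d * f v)| = |d| * |f u - f v| := by
        rw [← abs_mul]; congr 1; ring
    _ ≤ |d| * (K * dist u v) := mul_le_mul_of_nonneg_left h (abs_nonneg d)
    _ = (⟨|d|, abs_nonneg d⟩ : NNReal) * K * dist u v := by
        push_cast; ring

theorem ae_ne_in_Ioc {a b : ℝ} {f g : ℝ → ℝ} (h : ∀ x ∈ Ioo a b, f x = g x) :
    ∀ᵐ x ∂(volume.restrict (Ioc a b)), f x = g x := by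
  have hb : ∀ᵐ x : ℝ, x ≠ b := by
    rw [ae_iff]
    have : {x : ℝ | ¬x ≠ b} = {b} := by ext x; simp
    rw [this]
    exact Real.volume_singleton
  filter_upwards [ae_restrict_mem measurableSet_Ioc, ae_restrict_of_ae hb] with x hx hxb
  exact h x ⟨hx.1, lt_of_le_of_ne hx.2 hxb⟩



/-- Parabolicity forces the weight reciprocal to have divergent integral. -/
theorem Finv_div {F : ℝ → ℝ} (hFcont : ContinuousOn F (Ioi 0))
    (hFpos : ∀ t : ℝ, 0 < t → 0 < F t) (hFint : IntegrableOn F (Ioo 0 1))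
    (hpara : ∫⁻ t in Ioi (1 : ℝ),
        ENNReal.ofReal (t / ∫ s in Ioo (0 : ℝ) t, F s) = ⊤) :
    ∀ b C : ℝ, 0 < b → ∃ T : ℝ, b < T ∧ C ≤ ∫ s in Ioc b T, (F s)⁻¹ := by
  by_contra hcon
  push_neg at hcon
  obtain ⟨b, C, hb, hT⟩ := hcon
  have hInt : IntegrableOn (fun s => (F s)⁻¹) (Ioi b) := by
    refine integrableOn_Ioi_of_intervalIntegral_norm_bounded
      (μ := volume) (l := Filter.atTop) (f := fun s => (F s)⁻¹)
      (b := fun n : ℕ => b + 1 + n) C b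
      (fun _ => Finv_intOn hFcont hFpos hb) ?_ ?_
    · exact Filter.tendsto_atTop_add_const_left _ _ tendsto_natCast_atTop_atTop
    · refine Filter.Eventually.of_forall fun n => ?_
      have hn0 : (0:ℝ) ≤ n := Nat.cast_nonneg n
      have hlt : b < b + 1 + n := by linarith
      rw [intervalIntegral.integral_of_le hlt.le]
      have heq : ∀ s ∈ Ioc b (b + 1 + (n:ℝ)), ‖(F s)⁻¹‖ = (F s)⁻¹ := by
        intro s hs
        rw [Real.norm_eq_abs, abs_of_nonneg (inv_pos.2 (hFpos s (hb.trans hs.1))).le]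
      rw [setIntegral_congr_fun measurableSet_Ioc heq]
      exact (hT _ hlt).le
  set G : ℝ → ENNReal := fun s => ENNReal.ofReal (F s)⁻¹ with hG
  set m : ℝ := max b 1 with hm
  have hm1 : (1:ℝ) ≤ m := le_max_right _ _
  have hm0 : (0:ℝ) < m := lt_of_lt_of_le one_pos hm1
  have hGm : (∫⁻ s in Ioi m, G s) < ⊤ := by
    refine lt_of_le_of_lt (lintegral_mono_set (Ioi_subset_Ioi (le_max_left b 1))) ?_
    exact hInt.lintegral_lt_top
  set A : ℝ → ℝ := fun t => ∫ s in Ioo (0:ℝ) t, F s with hA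
  have hpow1 : ∀ k : ℕ, (1:ℝ) ≤ 2^k := fun k => by
    calc (1:ℝ) = 2^(0:ℕ) := by norm_num
    _ ≤ 2^k := pow_le_pow_right₀ one_le_two (Nat.zero_le k)
  -- bound each dyadic piece
  have hpiece : ∀ k : ℕ, (∫⁻ s in Ioc (2*m*2^k) (2*m*2^(k+1)), ENNReal.ofReal (s / A s))
      ≤ ENNReal.ofReal 8 * ∫⁻ s in Ioo (m*2^k) (2*(m*2^k)), G s := by
    intro k
    set u : ℝ := m * 2^k with hu
    have hu0 : 0 < u := by positivity
    have h2u : 2*m*2^k = 2*u := by rw [hu]; ring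
    have h4u : 2*m*2^(k+1) = 4*u := by rw [hu, pow_succ]; ring
    have hA2u : 0 < A (2*u) := A_pos hFcont hFpos hFint (by linarith)
    have hbound : ∀ᵐ s ∂(volume.restrict (Ioc (2*u) (4*u))),
        ENNReal.ofReal (s / A s) ≤ ENNReal.ofReal (4*u / A (2*u)) := by
      filter_upwards [ae_restrict_mem measurableSet_Ioc] with s hs
      refine ENNReal.ofReal_le_ofReal ?_
      have hAs : A (2*u) ≤ A s := A_mono hFcont hFpos hFint (by linarith) hs.1.le
      exact div_le_div₀ (by positivity) hs.2 hA2u hAs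
    calc (∫⁻ s in Ioc (2*m*2^k) (2*m*2^(k+1)), ENNReal.ofReal (s / A s))
        = ∫⁻ s in Ioc (2*u) (4*u), ENNReal.ofReal (s / A s) := by rw [h2u, h4u]
      _ ≤ ∫⁻ _s in Ioc (2*u) (4*u), ENNReal.ofReal (4*u / A (2*u)) := lintegral_mono_ae hbound
      _ = ENNReal.ofReal (4*u / A (2*u)) * ENNReal.ofReal (2*u) := by
          rw [setLIntegral_const, Real.volume_Ioc]
          congr 2
          ring
      _ = ENNReal.ofReal 8 * ENNReal.ofReal (u * u / A (2*u)) := by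
          rw [← ENNReal.ofReal_mul (by positivity), ← ENNReal.ofReal_mul (by norm_num)]
          congr 1
          field_simp
          ring
      _ ≤ ENNReal.ofReal 8 * ∫⁻ s in Ioo u (2*u), G s :=
          mul_le_mul_right (cs_step hFcont hFpos hFint hu0) _
  -- dyadic decomposition of `Ioi (2m)`
  set S : ℕ → Set ℝ := fun k => Ioc (2*m*2^k) (2*m*2^(k+1)) with hS
  have hSdisj : Pairwise (Function.onFun Disjoint S) := by
    have key : ∀ i j : ℕ, i < j → Disjoint (S i) (S j) := by
      intro i j hlt
      refine Set.Ioc_disjoint_Ioc.2 ?_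
      have h1 : 2*m*2^(i+1) ≤ 2*m*2^j := by
        have h2 : (2:ℝ)^(i+1) ≤ 2^j := pow_le_pow_right₀ one_le_two hlt
        nlinarith
      exact le_trans (min_le_left _ _) (le_trans h1 (le_max_right _ _))
    intro i j hij
    rcases hij.lt_or_gt with h | h
    · exact key i j h
    · exact (key j i h).symm
  have hSunion : (⋃ k, S k) = Ioi (2*m) := by
    ext s
    simp only [hS, mem_iUnion, mem_Ioc, mem_Ioi]
    constructor
    · rintro ⟨k, hk1, _⟩
      have := hpow1 k
      nlinarith
    · intro hs
      have hex : ∃ n : ℕ, s ≤ 2*m*2^(n+1) := by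
        obtain ⟨n, hn⟩ := pow_unbounded_of_one_lt (s / (2*m)) (one_lt_two (α := ℝ))
        refine ⟨n, ?_⟩
        rw [div_lt_iff₀ (by linarith)] at hn
        have h2 : (2:ℝ)^n ≤ 2^(n+1) := pow_le_pow_right₀ one_le_two (Nat.le_succ n)
        nlinarith
      refine ⟨Nat.find hex, ?_, Nat.find_spec hex⟩
      rcases Nat.eq_zero_or_pos (Nat.find hex) with h0 | hposk
      · rw [h0]; simpa using hs
      · obtain ⟨j, hj⟩ := Nat.exists_eq_succ_of_ne_zero hposk.ne'
        have hmin := Nat.find_min hex (by omega : j < Nat.find hex)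
        push_neg at hmin
        rw [hj]
        exact hmin
  -- sum the pieces
  have hsplit2 : (∫⁻ s in Ioi (2*m), ENNReal.ofReal (s / A s))
      = ∑' k, ∫⁻ s in S k, ENNReal.ofReal (s / A s) := by
    rw [← hSunion, lintegral_iUnion (fun _ => measurableSet_Ioc) hSdisj]
  have hsum1 : (∑' k, ∫⁻ s in S k, ENNReal.ofReal (s / A s))
      ≤ ENNReal.ofReal 8 * ∑' k, ∫⁻ s in Ioo (m*2^k) (2*(m*2^k)), G s := by
    rw [← ENNReal.tsum_mul_left]
    exact ENNReal.tsum_le_tsum hpiece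
  have hsum2 : (∑' k, ∫⁻ s in Ioo (m*2^k) (2*(m*2^k)), G s) ≤ ∫⁻ s in Ioi m, G s := by
    have hTdisj : Pairwise (Function.onFun Disjoint (fun k : ℕ => Ioo (m*2^k) (2*(m*2^k)))) := by
      have key : ∀ i j : ℕ, i < j →
          Disjoint (Ioo (m*2^i) (2*(m*2^i))) (Ioo (m*2^j) (2*(m*2^j))) := by
        intro i j hlt
        rw [Set.disjoint_left]
        intro x hx1 hx2
        have h1 : 2*(m*2^i) ≤ m*2^j := by
          have h2 : (2:ℝ)^(i+1) ≤ 2^j := pow_le_pow_right₀ one_le_two hlt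
          rw [pow_succ] at h2
          nlinarith
        have := hx1.2
        have := hx2.1
        linarith
      intro i j hij
      rcases hij.lt_or_gt with h | h
      · exact key i j h
      · exact (key j i h).symm
    rw [← lintegral_iUnion (fun _ => measurableSet_Ioo) hTdisj]
    refine lintegral_mono_set (iUnion_subset fun k x hx => ?_)
    have := hpow1 k
    have := hx.1
    simp only [mem_Ioi]
    nlinarith
  have hIoc12m : (∫⁻ s in Ioc 1 (2*m), ENNReal.ofReal (s / A s)) < ⊤ := by
    have hA1 : 0 < A 1 := A_pos hFcont hFpos hFint one_pos
    have hbd : ∀ᵐ s ∂(volume.restrict (Ioc (1:ℝ) (2*m))),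
        ENNReal.ofReal (s / A s) ≤ ENNReal.ofReal (2*m / A 1) := by
      filter_upwards [ae_restrict_mem measurableSet_Ioc] with s hs
      refine ENNReal.ofReal_le_ofReal ?_
      exact div_le_div₀ (by linarith) hs.2 hA1 (A_mono hFcont hFpos hFint one_pos hs.1.le)
    refine lt_of_le_of_lt (lintegral_mono_ae hbd) ?_
    rw [setLIntegral_const]
    exact ENNReal.mul_lt_top ENNReal.ofReal_lt_top (by rw [Real.volume_Ioc]; exact ENNReal.ofReal_lt_top)
  have hfin : (∫⁻ t in Ioi (1:ℝ), ENNReal.ofReal (t / A t)) < ⊤ := by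
    have hun : Ioc (1:ℝ) (2*m) ∪ Ioi (2*m) = Ioi (1:ℝ) := Ioc_union_Ioi_eq_Ioi (by linarith)
    rw [← hun, lintegral_union measurableSet_Ioi (Set.Ioc_disjoint_Ioi le_rfl)]
    have h2 : (∫⁻ s in Ioi (2*m), ENNReal.ofReal (s / A s)) < ⊤ := by
      rw [hsplit2]
      refine lt_of_le_of_lt (hsum1.trans (mul_le_mul_right hsum2 _)) ?_
      exact ENNReal.mul_lt_top ENNReal.ofReal_lt_top hGm
    exact ENNReal.add_lt_top.2 ⟨hIoc12m, h2⟩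
  have hfin' : (∫⁻ t in Ioi (1:ℝ), ENNReal.ofReal (t / ∫ s in Ioo (0:ℝ) t, F s)) < ⊤ := by
    simpa only [hA] using hfin
  rw [hpara] at hfin'
  exact lt_irrefl _ hfin'


/-- Step 1: `φ` is nonincreasing. -/
theorem step_le {F : ℝ → ℝ}
    (hFcont : ContinuousOn F (Ioi 0))
    (hFpos : ∀ t : ℝ, 0 < t → 0 < F t)
    (φ : ℝ → ℝ)
    (hφlip : ∀ a b : ℝ, 0 < a → ∃ K, LipschitzOnWith K φ (Icc a b))
    (hsuper : ∀ δ : ℝ, 0 < δ → ∀ ψ : ℝ → ℝ, (∀ t, 0 ≤ ψ t) →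
      (∃ K, LipschitzWith K ψ) → (∃ M : ℝ, ∀ t, M ≤ t → ψ t = 0) →
      0 ≤ ∫ t in Ioi δ, deriv φ t * deriv ψ t * F t)
    {a b : ℝ} (ha : 0 < a) (hab : a < b) : φ b ≤ φ a := by
  set L : ℝ := ∫ s in Ioc a b, (F s)⁻¹ with hLdef
  have hL : 0 < L := Finv_int_pos hFcont hFpos ha hab
  set ψ : ℝ → ℝ := fun u => 1 - rampI F a b u / L with hψdef
  have hψnn : ∀ u, 0 ≤ ψ u := by
    intro u
    have h1 : rampI F a b u ≤ L := rampI_le hFcont hFpos ha hab.le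
    have : rampI F a b u / L ≤ 1 := by rw [div_le_one hL]; exact h1
    simp only [hψdef]; linarith
  have hψlip : ∃ K, LipschitzWith K ψ := by
    obtain ⟨M, hM⟩ := rampI_lipschitz hFcont hFpos ha hab.le
    exact lipschitz_affine hM 1 (-(1/L)) (fun u => by simp only [hψdef]; ring)
  have hψvan : ∃ M : ℝ, ∀ t, M ≤ t → ψ t = 0 := by
    refine ⟨b, fun t htb => ?_⟩
    simp only [hψdef, rampI_right hab.le htb, ← hLdef]
    field_simp; norm_num
  have hψd1 : ∀ x ∈ Ioo a b, deriv ψ x = -((F x)⁻¹) / L := by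
    intro x hx
    have : HasDerivAt ψ (-((F x)⁻¹ / L)) x := by
      exact ((rampI_hasDerivAt hFcont hFpos ha hx).div_const L).const_sub 1
    rw [this.deriv]; ring
  have hψd0 : ∀ x, b < x → deriv ψ x = 0 := by
    intro x hx
    have hev : ψ =ᶠ[nhds x] fun _ => 0 := by
      filter_upwards [Ioi_mem_nhds hx] with u hu
      simp only [hψdef, rampI_right hab.le (le_of_lt hu), ← hLdef]
      field_simp; norm_num
    have : HasDerivAt ψ 0 x := (hasDerivAt_const x (0:ℝ)).congr_of_eventuallyEq hev
    exact this.deriv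
  have hsup := hsuper a ha ψ hψnn hψlip hψvan
  set f : ℝ → ℝ := fun t => deriv φ t * deriv ψ t * F t with hfdef
  have hind : ∀ t ∈ Ioi a, f t = (Ioc a b).indicator f t := by
    intro t ht
    by_cases htb : t ≤ b
    · rw [indicator_of_mem (show t ∈ Ioc a b from ⟨ht, htb⟩)]
    · rw [indicator_of_notMem (fun hmem => htb hmem.2)]
      simp only [hfdef, hψd0 t (not_le.1 htb), mul_zero, zero_mul]
  rw [setIntegral_congr_fun measurableSet_Ioi hind,
    setIntegral_indicator measurableSet_Ioc,
    inter_eq_self_of_subset_right Ioc_subset_Ioi_self] at hsup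
  have hae : ∀ᵐ t ∂(volume.restrict (Ioc a b)), f t = -(deriv φ t) / L := by
    refine ae_ne_in_Ioc fun x hx => ?_
    have hFx : F x ≠ 0 := (hFpos x (ha.trans hx.1)).ne'
    simp only [hfdef, hψd1 x hx]
    field_simp
  rw [integral_congr_ae hae] at hsup
  have heq : (∫ t in Ioc a b, -(deriv φ t) / L) = -(φ b - φ a) / L := by
    rw [integral_div, integral_neg, (phi_ftc φ hφlip ha hab.le).2]
  rw [heq] at hsup
  have h2 : 0 ≤ -(φ b - φ a) := by
    have h3 := mul_le_mul_of_nonneg_right hsup hL.le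
    rwa [zero_mul, div_mul_cancel₀ _ hL.ne'] at h3
  linarith





/-- Step 2: `φ` is nondecreasing. -/
theorem step_ge {F : ℝ → ℝ}
    (hFcont : ContinuousOn F (Ioi 0))
    (hFpos : ∀ t : ℝ, 0 < t → 0 < F t)
    (hFint : IntegrableOn F (Ioo 0 1))
    (hpara : ∫⁻ t in Ioi (1 : ℝ),
        ENNReal.ofReal (t / ∫ s in Ioo (0 : ℝ) t, F s) = ⊤)
    (φ : ℝ → ℝ)
    (hφpos : ∀ t : ℝ, 0 < t → 0 < φ t)
    (hφlip : ∀ a b : ℝ, 0 < a → ∃ K, LipschitzOnWith K φ (Icc a b))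
    (hsuper : ∀ δ : ℝ, 0 < δ → ∀ ψ : ℝ → ℝ, (∀ t, 0 ≤ ψ t) →
      (∃ K, LipschitzWith K ψ) → (∃ M : ℝ, ∀ t, M ≤ t → ψ t = 0) →
      0 ≤ ∫ t in Ioi δ, deriv φ t * deriv ψ t * F t)
    {a b : ℝ} (ha : 0 < a) (hab : a < b) : φ a ≤ φ b := by
  have hb : 0 < b := ha.trans hab
  refine le_of_forall_pos_le_add fun ε hε => ?_
  set L1 : ℝ := ∫ s in Ioc a b, (F s)⁻¹ with hL1def
  have hL1 : 0 < L1 := Finv_int_pos hFcont hFpos ha hab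
  set C : ℝ := L1 * φ b / ε + 1 with hCdef
  obtain ⟨T, hbT, hC⟩ := Finv_div hFcont hFpos hFint hpara b C hb
  set L2 : ℝ := ∫ s in Ioc b T, (F s)⁻¹ with hL2def
  have hL2 : 0 < L2 := Finv_int_pos hFcont hFpos hb hbT
  have hφb : 0 < φ b := hφpos b hb
  have hCpos : 0 < C := by
    have : 0 ≤ L1 * φ b / ε := by positivity
    simp only [hCdef]; linarith
  -- the test function
  set g1 : ℝ → ℝ := fun u => rampI F a b u / L1 with hg1def
  set g2 : ℝ → ℝ := fun u => 1 - rampI F b T u / L2 with hg2def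
  set ψ : ℝ → ℝ := fun u => min (g1 u) (g2 u) with hψdef
  have hg1nn : ∀ u, 0 ≤ g1 u :=
    fun u => div_nonneg (rampI_nonneg hFcont hFpos ha hab.le) hL1.le
  have hg2nn : ∀ u, 0 ≤ g2 u := by
    intro u
    have h1 : rampI F b T u ≤ L2 := rampI_le hFcont hFpos hb hbT.le
    have : rampI F b T u / L2 ≤ 1 := by rw [div_le_one hL2]; exact h1
    simp only [hg2def]; linarith
  have hψnn : ∀ u, 0 ≤ ψ u := fun u => le_min (hg1nn u) (hg2nn u)
  have hψlip : ∃ K, LipschitzWith K ψ := by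
    obtain ⟨M1, hM1⟩ := rampI_lipschitz hFcont hFpos ha hab.le
    obtain ⟨M2, hM2⟩ := rampI_lipschitz hFcont hFpos hb hbT.le
    obtain ⟨K1, hK1⟩ := lipschitz_affine (g := g1) hM1 0 (1/L1)
      (fun u => by simp only [hg1def]; ring)
    obtain ⟨K2, hK2⟩ := lipschitz_affine (g := g2) hM2 1 (-(1/L2))
      (fun u => by simp only [hg2def]; ring)
    exact ⟨K1 ⊔ K2, hK1.min hK2⟩
  have hg1_one : ∀ u, b ≤ u → g1 u = 1 := by
    intro u hu
    simp only [hg1def, rampI_right hab.le hu, ← hL1def]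
    field_simp
  have hg2_one : ∀ u, u ≤ b → g2 u = 1 := by
    intro u hu
    simp only [hg2def, rampI_left hbT.le hu, zero_div, sub_zero]
  have hψvan : ∃ M : ℝ, ∀ t, M ≤ t → ψ t = 0 := by
    refine ⟨T, fun t htT => ?_⟩
    have h2 : g2 t = 0 := by
      simp only [hg2def, rampI_right hbT.le htT, ← hL2def]
      field_simp; norm_num
    have h1 : g1 t = 1 := hg1_one t (hbT.le.trans htT)
    simp only [hψdef, h1, h2]
    norm_num
  -- derivative computations
  have hψd1 : ∀ x ∈ Ioo a b, deriv ψ x = (F x)⁻¹ / L1 := by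
    intro x hx
    have hev : ψ =ᶠ[nhds x] g1 := by
      filter_upwards [isOpen_Ioo.mem_nhds hx] with u hu
      have hlt : g1 u < 1 := by
        have := rampI_lt hFcont hFpos ha hab hu.2
        simp only [hg1def]
        rw [div_lt_one hL1]
        exact this
      show min (g1 u) (g2 u) = g1 u
      rw [min_eq_left (by rw [hg2_one u hu.2.le]; exact hlt.le)]
    have hd : HasDerivAt g1 ((F x)⁻¹ / L1) x :=
      (rampI_hasDerivAt hFcont hFpos ha hx).div_const L1
    exact (hd.congr_of_eventuallyEq hev).deriv
  have hψd2 : ∀ x ∈ Ioo b T, deriv ψ x = -((F x)⁻¹) / L2 := by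
    intro x hx
    have hev : ψ =ᶠ[nhds x] g2 := by
      filter_upwards [isOpen_Ioo.mem_nhds hx] with u hu
      have hlt : g2 u < 1 := by
        have h2 := rampI_pos hFcont hFpos hb hu.1 hu.2.le
        simp only [hg2def]
        have : 0 < rampI F b T u / L2 := div_pos h2 hL2
        linarith
      show min (g1 u) (g2 u) = g2 u
      rw [min_eq_right (by rw [hg1_one u hu.1.le]; exact hlt.le)]
    have hd : HasDerivAt g2 (-((F x)⁻¹ / L2)) x :=
      ((rampI_hasDerivAt hFcont hFpos hb hx).div_const L2).const_sub 1
    rw [(hd.congr_of_eventuallyEq hev).deriv]; ring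
  have hψd0 : ∀ x, T < x → deriv ψ x = 0 := by
    intro x hx
    have hev : ψ =ᶠ[nhds x] fun _ => 0 := by
      filter_upwards [Ioi_mem_nhds hx] with u hu
      have h2 : g2 u = 0 := by
        simp only [hg2def, rampI_right hbT.le (le_of_lt hu), ← hL2def]
        field_simp; norm_num
      have h1 : g1 u = 1 := hg1_one u (hbT.le.trans hu.le)
      simp only [hψdef, h1, h2]
      norm_num
    exact ((hasDerivAt_const x (0:ℝ)).congr_of_eventuallyEq hev).deriv
  -- apply the superharmonicity hypothesis
  have hsup := hsuper a ha ψ hψnn hψlip hψvan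
  set f : ℝ → ℝ := fun t => deriv φ t * deriv ψ t * F t with hfdef
  have hind : ∀ t ∈ Ioi a, f t = (Ioc a T).indicator f t := by
    intro t ht
    by_cases htT : t ≤ T
    · rw [indicator_of_mem (show t ∈ Ioc a T from ⟨ht, htT⟩)]
    · rw [indicator_of_notMem (fun hmem => htT hmem.2)]
      simp only [hfdef, hψd0 t (not_le.1 htT), mul_zero, zero_mul]
  rw [setIntegral_congr_fun measurableSet_Ioi hind,
    setIntegral_indicator measurableSet_Ioc,
    inter_eq_self_of_subset_right Ioc_subset_Ioi_self] at hsup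
  -- split the integral
  have hae1 : ∀ᵐ t ∂(volume.restrict (Ioc a b)), f t = deriv φ t / L1 := by
    refine ae_ne_in_Ioc fun x hx => ?_
    have hFx : F x ≠ 0 := (hFpos x (ha.trans hx.1)).ne'
    simp only [hfdef, hψd1 x hx]
    field_simp
  have hae2 : ∀ᵐ t ∂(volume.restrict (Ioc b T)), f t = -(deriv φ t) / L2 := by
    refine ae_ne_in_Ioc fun x hx => ?_
    have hFx : F x ≠ 0 := (hFpos x (hb.trans hx.1)).ne'
    simp only [hfdef, hψd2 x hx]
    field_simp
  have hae1' : f =ᶠ[ae (volume.restrict (Ioc a b))] (fun t => deriv φ t / L1) := hae1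
  have hae2' : f =ᶠ[ae (volume.restrict (Ioc b T))] (fun t => -(deriv φ t) / L2) := hae2
  have hfi1 : IntegrableOn f (Ioc a b) :=
    ((phi_ftc φ hφlip ha hab.le).1.div_const L1).congr hae1'.symm
  have hfi2 : IntegrableOn f (Ioc b T) := by
    refine Integrable.congr ?_ hae2'.symm
    exact ((phi_ftc φ hφlip hb hbT.le).1.neg).div_const L2
  have hIocsplit : Ioc a b ∪ Ioc b T = Ioc a T := Ioc_union_Ioc_eq_Ioc hab.le hbT.le
  rw [← hIocsplit, setIntegral_union (Set.Ioc_disjoint_Ioc_of_le le_rfl) measurableSet_Ioc hfi1 hfi2]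
    at hsup
  rw [integral_congr_ae hae1, integral_congr_ae hae2] at hsup
  have heq1 : (∫ t in Ioc a b, deriv φ t / L1) = (φ b - φ a) / L1 := by
    rw [integral_div, (phi_ftc φ hφlip ha hab.le).2]
  have heq2 : (∫ t in Ioc b T, -(deriv φ t) / L2) = -((φ T - φ b) / L2) := by
    rw [integral_div, integral_neg, (phi_ftc φ hφlip hb hbT.le).2]
    ring
  rw [heq1, heq2] at hsup
  -- conclude with arithmetic
  have hφT : 0 < φ T := hφpos T (hb.trans hbT)
  have e1 : (φ T - φ b) / L2 ≤ (φ b - φ a) / L1 := by linarith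
  have e2 : -(φ b) / L2 ≤ (φ T - φ b) / L2 :=
    (div_le_div_iff_of_pos_right hL2).2 (by linarith)
  have e3 : -(φ b) / L2 ≤ (φ b - φ a) / L1 := e2.trans e1
  rw [div_le_div_iff₀ hL2 hL1] at e3
  have hεC : ε * C = L1 * φ b + ε := by
    simp only [hCdef]
    field_simp
  have e4 : φ b * L1 ≤ ε * L2 := by
    have h5 : ε * C ≤ ε * L2 := mul_le_mul_of_nonneg_left hC hε.le
    nlinarith
  nlinarith [e3, e4, hL2, hL1]

/-- **Weighted half-lines with slow volume growth carry no nonconstant weakly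
superharmonic functions.**
Let `F : (0,∞) → (0,∞)` be continuous and integrable near `0`, let
`A t = ∫₀ᵗ F` and assume the parabolicity condition `∫₁^∞ t / A(t) dt = +∞`.
Let `φ : (0,∞) → (0,∞)` be locally Lipschitz and weakly superharmonic with respect
to the weight `F`, in the sense that `∫_δ^∞ φ' ψ' F ≥ 0` for every `δ > 0` and every
nonnegative Lipschitz `ψ` on `[δ,∞)` vanishing outside a bounded set (derivatives
exist a.e. and are encoded by `deriv`).  Then `φ` is constant on `(0,∞)`. -/
theorem constant_of_superharmonic_parabolic (F : ℝ → ℝ)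
    (hFcont : ContinuousOn F (Ioi 0))
    (hFpos : ∀ t : ℝ, 0 < t → 0 < F t)
    (hFint : IntegrableOn F (Ioo 0 1))
    (hpara : ∫⁻ t in Ioi (1 : ℝ),
        ENNReal.ofReal (t / ∫ s in Ioo (0 : ℝ) t, F s) = ⊤)
    (φ : ℝ → ℝ)
    (hφpos : ∀ t : ℝ, 0 < t → 0 < φ t)
    (hφlip : ∀ a b : ℝ, 0 < a → ∃ K, LipschitzOnWith K φ (Icc a b))
    (hsuper : ∀ δ : ℝ, 0 < δ → ∀ ψ : ℝ → ℝ, (∀ t, 0 ≤ ψ t) →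
      (∃ K, LipschitzWith K ψ) → (∃ M : ℝ, ∀ t, M ≤ t → ψ t = 0) →
      0 ≤ ∫ t in Ioi δ, deriv φ t * deriv ψ t * F t) :
    ∀ s t : ℝ, 0 < s → 0 < t → φ s = φ t := by
  intro s t hs ht
  rcases lt_trichotomy s t with h | h | h
  · exact le_antisymm (step_ge hFcont hFpos hFint hpara φ hφpos hφlip hsuper hs h)
      (step_le hFcont hFpos φ hφlip hsuper hs h)
  · rw [h]
  · exact (le_antisymm (step_ge hFcont hFpos hFint hpara φ hφpos hφlip hsuper ht h)
      (step_le hFcont hFpos φ hφlip hsuper ht h)).symm
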